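/- Every partition λ has a unique base-p expansion λ = Σ_{i≥0} p^i λ^i where each λ^i is a p-restricted partition and all but finitely many λ^i are zero. -/

import Mathlib

/-- A partition: a weakly decreasing, eventually-zero sequence of naturals
(part `i+1` of the partition is `f i`, i.e. 0-based indexing). -/
def IsPartition (f : ℕ → ℕ) : Prop :=
  (∀ i, f (i + 1) ≤ f i) ∧ ∃ N, ∀ i, N ≤ i → f i = 0

/-- `f` is `l`-restricted: successive differences are `< l`. -/
def Restricted (l : ℕ) (f : ℕ → ℕ) : Prop := ∀ i, f i - f (i + 1) < l

/-- Transpose (conjugate) partition: `conj f b` is the number of parts `> b`,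
i.e. the `(b+1)`-st column length. -/
noncomputable def conj (f : ℕ → ℕ) (b : ℕ) : ℕ := Nat.card {i : ℕ // b < f i}

/-- Hook length of the (0-based) cell `(a, b)` of the diagram of `f`:
`λ_{a+1} + λ'_{b+1} - (a+1) - (b+1) + 1`. -/
noncomputable def hook (f : ℕ → ℕ) (a b : ℕ) : ℕ := f a + conj f b - (a + b + 1)

/-- `f` is an `l`-core: no hook length is divisible by `l`. -/
def IsCore (l : ℕ) (f : ℕ → ℕ) : Prop := ∀ a b, b < f a → ¬ l ∣ hook f a b

/-- Length (number of nonzero parts) of a partition. -/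
noncomputable def plen (f : ℕ → ℕ) : ℕ := Nat.card {i : ℕ // f i ≠ 0}

/-- Steinberg index of `f` relative to `l`: the largest `m` such that the first `m`
successive differences of `f` all equal `l - 1`. -/
noncomputable def stind (l : ℕ) (f : ℕ → ℕ) : ℕ :=
  sSup {m : ℕ | ∀ i < m, f i - f (i + 1) = l - 1}


lemma telescope (f : ℕ → ℕ) (hf : ∀ i, f (i+1) ≤ f i) :
    ∀ n j, f j = f (j + n) + ∑ k ∈ Finset.range n, (f (j + k) - f (j + k + 1)) := by
  intro n
  induction n with
  | zero => simp
  | succ n ih =>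
    intro j
    have h1 := ih j
    have h2 := hf (j + n)
    rw [Finset.sum_range_succ]
    have h3 : j + (n+1) = (j + n) + 1 := by omega
    rw [h3]
    omega

lemma digitsum (p : ℕ) (hp : 2 ≤ p) :
    ∀ N n, n < p ^ N → ∑ i ∈ Finset.range N, p ^ i * (n / p ^ i % p) = n := by
  intro N
  induction N with
  | zero =>
    intro n hn
    simp only [pow_zero] at hn
    simp
    omega
  | succ N ih =>
    intro n hn
    rw [Finset.sum_range_succ']
    have key : ∀ i, p ^ (i+1) * (n / p ^ (i+1) % p) = p * (p ^ i * ((n / p) / p ^ i % p)) := by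
      intro i
      have h1 : n / p ^ (i+1) = n / p / p ^ i := by
        rw [Nat.div_div_eq_div_mul, ← pow_succ']
      rw [h1, pow_succ']
      ring
    have hdiv : n / p < p ^ N := by
      rw [Nat.div_lt_iff_lt_mul (by omega : 0 < p)]
      calc n < p ^ (N+1) := hn
        _ = p ^ N * p := pow_succ p N
    simp only [key, ← Finset.mul_sum, pow_zero, one_mul, Nat.div_one]
    rw [ih _ hdiv]
    exact Nat.div_add_mod n p

lemma base_p_unique (p : ℕ) (hp : 2 ≤ p) :
    ∀ N (a b : ℕ → ℕ), (∀ i, a i < p) → (∀ i, b i < p) →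
    (∑ i ∈ Finset.range N, p ^ i * a i = ∑ i ∈ Finset.range N, p ^ i * b i) →
    ∀ i < N, a i = b i := by
  intro N
  induction N with
  | zero => intro a b _ _ _ i hi; omega
  | succ N ih =>
    intro a b ha hb h i hi
    rw [Finset.sum_range_succ', Finset.sum_range_succ'] at h
    have key : ∀ (c : ℕ → ℕ), ∑ i ∈ Finset.range N, p ^ (i+1) * c (i+1)
        = p * ∑ i ∈ Finset.range N, p ^ i * c (i+1) := by
      intro c
      rw [Finset.mul_sum]
      refine Finset.sum_congr rfl fun x _ => ?_
      rw [pow_succ']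
      ring
    rw [key a, key b] at h
    simp only [pow_zero, one_mul] at h
    have h0 : a 0 = b 0 := by
      have e1 : (p * ∑ i ∈ Finset.range N, p ^ i * a (i+1) + a 0) % p = a 0 % p :=
        Nat.mul_add_mod _ _ _
      have e2 : (p * ∑ i ∈ Finset.range N, p ^ i * b (i+1) + b 0) % p = b 0 % p :=
        Nat.mul_add_mod _ _ _
      rw [Nat.mod_eq_of_lt (ha 0)] at e1
      rw [Nat.mod_eq_of_lt (hb 0)] at e2
      rw [h, e2] at e1; exact e1.symm
    have hsum : ∑ i ∈ Finset.range N, p ^ i * a (i+1) = ∑ i ∈ Finset.range N, p ^ i * b (i+1) := by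
      have : p * ∑ i ∈ Finset.range N, p ^ i * a (i+1) = p * ∑ i ∈ Finset.range N, p ^ i * b (i+1) := by
        omega
      exact Nat.eq_of_mul_eq_mul_left (by omega) this
    rcases i with _ | i
    · exact h0
    · exact ih (fun i => a (i+1)) (fun i => b (i+1)) (fun i => ha _) (fun i => hb _) hsum i (by omega)
theorem exists_unique_base_p_expansion (p : ℕ) (hp : 2 ≤ p)
    (f : ℕ → ℕ) (hf : IsPartition f) :
    ∃! d : ℕ → ℕ → ℕ,
      (∀ i, IsPartition (d i) ∧ Restricted p (d i)) ∧
      (∃ N, ∀ i, N ≤ i → d i = fun _ => 0) ∧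
      (∀ j, f j = ∑ᶠ i, p ^ i * d i j) := by
  obtain ⟨hmono, N0, hN0⟩ := hf
  have hant : Antitone f := antitone_nat_of_succ_le hmono
  set M := f 0 with hM
  set c : ℕ → ℕ → ℕ := fun i k => (f k - f (k+1)) / p ^ i % p with hc
  have hglt : ∀ k, f k - f (k+1) < p ^ M := fun k =>
    lt_of_le_of_lt (le_trans (Nat.sub_le _ _) (hant (Nat.zero_le k)))
      (Nat.lt_pow_self (by omega : 1 < p))
  have hclt : ∀ i k, c i k < p := fun i k => Nat.mod_lt _ (by omega)
  have hczi : ∀ i k, M ≤ i → c i k = 0 := by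
    intro i k h
    have h2 : f k - f (k+1) < p ^ i :=
      lt_of_lt_of_le (hglt k) (Nat.pow_le_pow_right (by omega) h)
    simp [hc, Nat.div_eq_of_lt h2]
  have hczk : ∀ i k, N0 ≤ k → c i k = 0 := by
    intro i k h
    simp [hc, hN0 k h, hN0 (k+1) (by omega)]
  refine ⟨fun i j => ∑ k ∈ Finset.Ico j N0, c i k, ⟨?_, ?_, ?_⟩, ?_⟩
  · -- partitions and restricted
    intro i
    refine ⟨⟨fun j => ?_, ⟨N0, fun j hj => ?_⟩⟩, fun j => ?_⟩
    · exact Finset.sum_le_sum_of_subset (Finset.Ico_subset_Ico (by omega) le_rfl)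
    · show ∑ k ∈ Finset.Ico j N0, c i k = 0
      rw [Finset.Ico_eq_empty (by omega), Finset.sum_empty]
    · show ∑ k ∈ Finset.Ico j N0, c i k - ∑ k ∈ Finset.Ico (j+1) N0, c i k < p
      by_cases hj : j < N0
      · rw [Finset.sum_eq_sum_Ico_succ_bot hj, Nat.add_sub_cancel]
        exact hclt i j
      · rw [Finset.Ico_eq_empty hj, Finset.Ico_eq_empty (by omega), Finset.sum_empty]
        omega
  · -- eventually zero
    refine ⟨M, fun i hi => ?_⟩
    funext j
    show ∑ k ∈ Finset.Ico j N0, c i k = 0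
    exact Finset.sum_eq_zero fun k _ => hczi i k hi
  · -- sum
    intro j
    have hsupp : (Function.support fun i => p ^ i * ∑ k ∈ Finset.Ico j N0, c i k)
        ⊆ ↑(Finset.range M) := by
      intro i hi
      simp only [Function.mem_support] at hi
      simp only [Finset.coe_range, Set.mem_Iio]
      by_contra h
      push_neg at h
      exact hi (by rw [Finset.sum_eq_zero fun k _ => hczi i k h, mul_zero])
    show f j = ∑ᶠ i : ℕ, p ^ i * ∑ k ∈ Finset.Ico j N0, c i k
    rw [finsum_eq_sum_of_support_subset _ hsupp]
    have e1 : ∑ i ∈ Finset.range M, p ^ i * ∑ k ∈ Finset.Ico j N0, c i k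
        = ∑ k ∈ Finset.Ico j N0, ∑ i ∈ Finset.range M, p ^ i * c i k := by
      simp_rw [Finset.mul_sum]
      exact Finset.sum_comm
    have e2 : ∀ k, ∑ i ∈ Finset.range M, p ^ i * c i k = f k - f (k+1) := by
      intro k
      have := digitsum p hp M (f k - f (k+1)) (hglt k)
      rw [hc]
      exact this
    rw [e1, Finset.sum_congr rfl fun k _ => e2 k, Finset.sum_Ico_eq_sum_range]
    have ht := telescope f hmono (N0 - j) j
    have hz : f (j + (N0 - j)) = 0 := hN0 _ (by omega)
    omega
  · -- uniqueness
    rintro d ⟨hd1, ⟨N, hN⟩, hd3⟩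
    have hdmono : ∀ i k, d i (k+1) ≤ d i k := fun i k => (hd1 i).1.1 k
    have hdlt : ∀ i k, d i k - d i (k+1) < p := fun i k => (hd1 i).2 k
    have hdz : ∀ i k, N ≤ i → d i k = 0 := fun i k h => by rw [hN i h]
    have hsum : ∀ j K, N ≤ K → ∑ i ∈ Finset.range K, p ^ i * d i j = f j := by
      intro j K hK
      have hsupp : (Function.support fun i => p ^ i * d i j) ⊆ ↑(Finset.range K) := by
        intro i hi
        simp only [Function.mem_support] at hi
        simp only [Finset.coe_range, Set.mem_Iio]
        by_contra h
        push_neg at h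
        exact hi (by rw [hdz i j (le_trans hK h), mul_zero])
      rw [hd3 j, finsum_eq_sum_of_support_subset _ hsupp]
    have hediff : ∀ j K, N ≤ K →
        ∑ i ∈ Finset.range K, p ^ i * (d i j - d i (j+1)) + f (j+1) = f j := by
      intro j K hK
      rw [← hsum (j+1) K hK, ← hsum j K hK, ← Finset.sum_add_distrib]
      refine Finset.sum_congr rfl fun i _ => ?_
      rw [← Nat.mul_add, Nat.sub_add_cancel (hdmono i j)]
    have hkey : ∀ i j, d i j - d i (j+1) = c i j := by
      intro i j
      set K := max (max N M) (i+1) with hK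
      have hKN : N ≤ K := le_trans (le_max_left N M) (le_max_left _ _)
      have hKM : M ≤ K := le_trans (le_max_right N M) (le_max_left _ _)
      have h1 : ∑ l ∈ Finset.range K, p ^ l * (d l j - d l (j+1)) = f j - f (j+1) := by
        have := hediff j K hKN
        omega
      have h2 : ∑ l ∈ Finset.range K, p ^ l * c l j = f j - f (j+1) := by
        have hsub : ∑ l ∈ Finset.range M, p ^ l * c l j
            = ∑ l ∈ Finset.range K, p ^ l * c l j := by
          apply Finset.sum_subset (Finset.range_subset_range.2 hKM)
          intro x _ hx
          simp only [Finset.mem_range, not_lt] at hx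
          rw [hczi x j hx, mul_zero]
        rw [← hsub, hc]
        exact digitsum p hp M (f j - f (j+1)) (hglt j)
      exact base_p_unique p hp K (fun l => d l j - d l (j+1)) (fun l => c l j)
        (fun l => hdlt l j) (fun l => hclt l j) (h1.trans h2.symm) i
        (lt_of_lt_of_le (Nat.lt_succ_self i) (le_max_right _ _))
    funext i j
    show d i j = ∑ k ∈ Finset.Ico j N0, c i k
    obtain ⟨Ni, hNi⟩ := (hd1 i).1.2
    have ht := telescope (d i) (hdmono i) (N0 + Ni) j
    have hz : d i (j + (N0 + Ni)) = 0 := hNi _ (by omega)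
    have hs : ∑ k ∈ Finset.range (N0 + Ni), (d i (j+k) - d i (j+k+1))
        = ∑ k ∈ Finset.range (N0 + Ni), c i (j+k) :=
      Finset.sum_congr rfl fun k _ => hkey i (j+k)
    rw [Finset.sum_Ico_eq_sum_range]
    have hext : ∑ k ∈ Finset.range (N0 - j), c i (j + k)
        = ∑ k ∈ Finset.range (N0 + Ni), c i (j + k) := by
      apply Finset.sum_subset (Finset.range_subset_range.2 (by omega))
      intro k _ hk
      simp only [Finset.mem_range, not_lt] at hk
      exact hczk i (j+k) (by omega)
    omega
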